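/- Let a⁻, a⁺ > 0 with a⁻ ≠ a⁺, let A⁻, A⁺ ∈ ℝ, and define f : ℝ → ℝ by f(x) = A⁻·exp(a⁻·x) for x < 0 and f(x) = A⁺·exp(-a⁺·x) for x ≥ 0. Then f ∈ L²(ℝ), and for all h ≥ 0, ∫_{-∞}^{∞} f(x)·f(x+h) dx = ((A⁻)²/(2a⁻) - A⁻A⁺/(a⁻ - a⁺))·exp(-h·a⁻) + ((A⁺)²/(2a⁺) + A⁻A⁺/(a⁻ - a⁺))·exp(-h·a⁺). -/

import Mathlib

open MeasureTheory Set

lemma expIoi_int {b : ℝ} (hb : 0 < b) (c : ℝ) :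
    IntegrableOn (fun x : ℝ => Real.exp (-b * x)) (Ioi c) :=
  exp_neg_integrableOn_Ioi c hb

lemma expIoi_val {b : ℝ} (hb : 0 < b) (c : ℝ) :
    ∫ x in Ioi c, Real.exp (-b * x) = Real.exp (-b * c) / b := by
  have h := integral_comp_mul_left_Ioi (fun x => Real.exp (-x)) c hb
  simp only [smul_eq_mul, integral_exp_neg_Ioi] at h
  simp only [neg_mul] at h ⊢
  rw [h]; ring

lemma expIic_int {b : ℝ} (hb : 0 < b) (c : ℝ) :
    IntegrableOn (fun x : ℝ => Real.exp (b * x)) (Iic c) := by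
  rw [integrableOn_Iic_iff_integrableOn_Iio]
  have h1 : Integrable ((Ioi (-c)).indicator (fun x : ℝ => Real.exp (-b * x))) volume :=
    (integrable_indicator_iff measurableSet_Ioi).2 (expIoi_int hb (-c))
  have h2 := h1.comp_neg
  have h3 : (fun x : ℝ => ((Ioi (-c)).indicator (fun y : ℝ => Real.exp (-b * y))) (-x))
      = (Iio c).indicator (fun x : ℝ => Real.exp (b * x)) := by
    ext x
    by_cases hx : x < c
    · rw [indicator_of_mem (show (-x) ∈ Ioi (-c) by simpa using hx),
        indicator_of_mem (show x ∈ Iio c from hx)]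
      ring_nf
    · rw [indicator_of_notMem (show (-x) ∉ Ioi (-c) by simpa using hx),
        indicator_of_notMem (show x ∉ Iio c from hx)]
  rw [h3] at h2
  exact (integrable_indicator_iff measurableSet_Iio).1 h2

lemma expIic_val {b : ℝ} (hb : 0 < b) (c : ℝ) :
    ∫ x in Iic c, Real.exp (b * x) = Real.exp (b * c) / b := by
  have h := integral_comp_neg_Ioi (-c) (fun x => Real.exp (b * x))
  simp only [neg_neg, mul_neg, ← neg_mul] at h
  rw [← h, expIoi_val hb]
  ring_nf

theorem stmt_4 (am ap Am Ap : ℝ) (ham : 0 < am) (hap : 0 < ap) (hne : am ≠ ap)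
    (f : ℝ → ℝ)
    (hf : ∀ x : ℝ, f x = if x < 0 then Am * Real.exp (am * x) else Ap * Real.exp (-ap * x)) :
    MemLp f 2 volume ∧
    ∀ h : ℝ, 0 ≤ h →
      ∫ x : ℝ, f x * f (x + h) =
        (Am ^ 2 / (2 * am) - Am * Ap / (am - ap)) * Real.exp (-h * am) +
        (Ap ^ 2 / (2 * ap) + Am * Ap / (am - ap)) * Real.exp (-h * ap) := by
  have h2am : (0:ℝ) < 2 * am := by linarith
  have h2ap : (0:ℝ) < 2 * ap := by linarith
  have hD : am - ap ≠ 0 := sub_ne_zero.2 hne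
  have hmeas : Measurable f := by
    have hfe : f = fun x => if x < 0 then Am * Real.exp (am * x) else Ap * Real.exp (-ap * x) :=
      funext hf
    rw [hfe]
    exact Measurable.ite measurableSet_Iio (by fun_prop) (by fun_prop)
  have key : ∀ A B s t : ℝ,
      (A * Real.exp s) * (B * Real.exp t) = A * B * Real.exp (s + t) := by
    intro A B s t; rw [Real.exp_add]; ring
  constructor
  · rw [memLp_two_iff_integrable_sq hmeas.aestronglyMeasurable]
    have he : (fun x => f x ^ 2) = fun x =>
        if x < 0 then Am ^ 2 * Real.exp ((2 * am) * x) else Ap ^ 2 * Real.exp (-(2 * ap) * x) := by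
      funext x
      rw [hf x]
      split_ifs
      · rw [mul_pow, pow_two (Real.exp _), ← Real.exp_add,
          show am * x + am * x = 2 * am * x from by ring]
      · rw [mul_pow, pow_two (Real.exp _), ← Real.exp_add,
          show -ap * x + -ap * x = -(2 * ap) * x from by ring]
    rw [he, ← integrableOn_univ, ← Iio_union_Ici (a := (0:ℝ))]
    apply IntegrableOn.union
    · refine IntegrableOn.congr_fun
        ((show IntegrableOn (fun x : ℝ => Am ^ 2 * Real.exp (2 * am * x)) (Iic 0) volume from
          (expIic_int h2am 0).const_mul (Am ^ 2)).mono_set Iio_subset_Iic_self)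
        ?_ measurableSet_Iio
      intro x hx
      simp [Set.mem_Iio.1 hx]
    · refine IntegrableOn.congr_fun
        ((integrableOn_Ici_iff_integrableOn_Ioi enorm_ne_top).2 ((expIoi_int h2ap 0).const_mul (Ap ^ 2)))
        ?_ measurableSet_Ici
      intro x hx
      simp [not_lt.2 (Set.mem_Ici.1 hx)]
  · intro h hh
    set g : ℝ → ℝ := fun x => f x * f (x + h) with hgdef
    have e1 : ∀ x ∈ Iio (-h), g x = Am ^ 2 * Real.exp (am * h) * Real.exp (2 * am * x) := by
      intro x hx
      have hx' : x < -h := hx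
      have h1 : x < 0 := by linarith
      have h2 : x + h < 0 := by linarith
      show f x * f (x + h) = _
      rw [hf x, hf (x + h), if_pos h1, if_pos h2, key,
        show am * x + am * (x + h) = am * h + 2 * am * x from by ring, Real.exp_add]
      ring
    have e2 : ∀ x ∈ Ico (-h) 0,
        g x = Am * Ap * Real.exp (-ap * h) * Real.exp ((am - ap) * x) := by
      intro x hx
      have h1 : x < 0 := hx.2
      have h2 : ¬ x + h < 0 := by have := hx.1; push_neg; linarith
      show f x * f (x + h) = _
      rw [hf x, hf (x + h), if_pos h1, if_neg h2, key,
        show am * x + -ap * (x + h) = -ap * h + (am - ap) * x from by ring, Real.exp_add]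
      ring
    have e3 : ∀ x ∈ Ici (0:ℝ), g x = Ap ^ 2 * Real.exp (-ap * h) * Real.exp (-(2 * ap) * x) := by
      intro x hx
      have h1 : ¬ x < 0 := not_lt.2 hx
      have h2 : ¬ x + h < 0 := by push_neg; have := Set.mem_Ici.1 hx; linarith
      show f x * f (x + h) = _
      rw [hf x, hf (x + h), if_neg h1, if_neg h2, key,
        show -ap * x + -ap * (x + h) = -ap * h + -(2 * ap) * x from by ring, Real.exp_add]
      ring
    have i1 : IntegrableOn g (Iio (-h)) volume :=
      ((show IntegrableOn (fun x : ℝ => Am ^ 2 * Real.exp (am * h) * Real.exp (2 * am * x))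
          (Iic (-h)) volume from
          (expIic_int h2am (-h)).const_mul (Am ^ 2 * Real.exp (am * h))).mono_set
        Iio_subset_Iic_self).congr_fun (fun x hx => (e1 x hx).symm) measurableSet_Iio
    have i2 : IntegrableOn g (Ico (-h) 0) volume := by
      have c2 : IntegrableOn
          (fun x : ℝ => Am * Ap * Real.exp (-ap * h) * Real.exp ((am - ap) * x))
          (Ico (-h) 0) volume :=
        ((Continuous.integrableOn_Icc (by fun_prop)).mono_set Ico_subset_Icc_self)
      exact c2.congr_fun (fun x hx => (e2 x hx).symm) measurableSet_Ico
    have i3 : IntegrableOn g (Ici (0:ℝ)) volume := by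
      have c3 : IntegrableOn
          (fun x : ℝ => Ap ^ 2 * Real.exp (-ap * h) * Real.exp (-(2 * ap) * x))
          (Ici (0:ℝ)) volume :=
        (integrableOn_Ici_iff_integrableOn_Ioi enorm_ne_top).2 ((expIoi_int h2ap 0).const_mul _)
      exact c3.congr_fun (fun x hx => (e3 x hx).symm) measurableSet_Ici
    have hd2 : Disjoint (Ico (-h) (0:ℝ)) (Ici (0:ℝ)) := by
      rw [Set.disjoint_left]
      intro x hx hx'
      exact absurd hx.2 (not_lt.2 hx')
    have hu2 : Ico (-h) (0:ℝ) ∪ Ici (0:ℝ) = Ici (-h) := Ico_union_Ici_eq_Ici (by linarith)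
    have hsplit : ∫ x : ℝ, g x =
        (∫ x in Iio (-h), g x) + ((∫ x in Ico (-h) 0, g x) + ∫ x in Ici (0:ℝ), g x) := by
      rw [← setIntegral_union hd2 measurableSet_Ici i2 i3, hu2,
        ← setIntegral_union (Iio_disjoint_Ici le_rfl) measurableSet_Ici i1
          (by rw [← hu2]; exact i2.union i3),
        Iio_union_Ici, setIntegral_univ]
    have A1 : ∫ x in Iio (-h), g x = Am ^ 2 / (2 * am) * Real.exp (-h * am) := by
      rw [setIntegral_congr_fun measurableSet_Iio e1, integral_const_mul,
        ← integral_Iic_eq_integral_Iio, expIic_val h2am]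
      have : Real.exp (am * h) * Real.exp (2 * am * (-h)) = Real.exp (-h * am) := by
        rw [← Real.exp_add]; congr 1; ring
      rw [← this]; ring
    have A3 : ∫ x in Ici (0:ℝ), g x = Ap ^ 2 / (2 * ap) * Real.exp (-h * ap) := by
      rw [setIntegral_congr_fun measurableSet_Ici e3, integral_const_mul,
        integral_Ici_eq_integral_Ioi, expIoi_val h2ap]
      have : Real.exp (-ap * h) = Real.exp (-h * ap) := by congr 1; ring
      rw [this]
      simp [Real.exp_zero]
      ring
    have A2 : ∫ x in Ico (-h) 0, g x =
        Am * Ap / (am - ap) * (Real.exp (-h * ap) - Real.exp (-h * am)) := by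
      rw [setIntegral_congr_fun measurableSet_Ico e2, integral_const_mul,
        integral_Ico_eq_integral_Ioo, ← integral_Ioc_eq_integral_Ioo,
        ← intervalIntegral.integral_of_le (by linarith : -h ≤ (0:ℝ)),
        intervalIntegral.integral_comp_mul_left (fun x => Real.exp x) hD,
        integral_exp]
      have hpa : Real.exp (-ap * h) * Real.exp ((am - ap) * (-h)) = Real.exp (-h * am) := by
        rw [← Real.exp_add]; congr 1; ring
      have hpp : Real.exp (-ap * h) = Real.exp (-h * ap) := by congr 1; ring
      rw [smul_eq_mul, mul_zero, Real.exp_zero, ← hpa, ← hpp]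
      field_simp
    rw [show (∫ x : ℝ, f x * f (x + h)) = ∫ x : ℝ, g x from rfl, hsplit, A1, A2, A3]
    field_simp
    ring
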